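/- Let x: [0,∞) → ℝ be continuously differentiable and bounded with x(t) ≥ X > 0 for all t, and satisfy x' = x(φ(t) − μ − γx) where φ is continuous and bounded, μ, γ > 0. Then lim_{t→∞} [⟨φ⟩_t − μ − γ⟨x⟩_t] = 0, where ⟨f⟩_t = (1/t)∫₀ᵗ f(s) ds. -/

import Mathlib

open MeasureTheory intervalIntegral

/-- Time-averaging the per-capita growth equation: if `x' = x(φ - μ - γx)`
with `x` bounded and bounded away from zero, then
`⟨φ⟩_t - μ - γ⟨x⟩_t → 0` as `t → ∞`. -/
theorem stmt7 (x : ℝ → ℝ) (φ : ℝ → ℝ) (μ γ X C : ℝ)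
    (hμ : 0 < μ) (hγ : 0 < γ) (hX : 0 < X)
    (hφcont : Continuous φ) (hφbd : ∀ t, |φ t| ≤ C)
    (hxlo : ∀ t, 0 ≤ t → X ≤ x t) (hxhi : ∀ t, 0 ≤ t → x t ≤ C)
    (hode : ∀ t, 0 ≤ t → HasDerivAt x (x t * (φ t - μ - γ * x t)) t) :
    Filter.Tendsto
      (fun t => (1 / t) * (∫ s in (0:ℝ)..t, φ s) - μ -
        γ * ((1 / t) * ∫ s in (0:ℝ)..t, x s))
      Filter.atTop (nhds 0) := by
  have hxpos : ∀ t, 0 ≤ t → 0 < x t := fun t ht => lt_of_lt_of_le hX (hxlo t ht)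
  -- derivative of log x
  have hlog : ∀ t, 0 ≤ t →
      HasDerivAt (fun s => Real.log (x s)) (φ t - μ - γ * x t) t := by
    intro t ht
    have h := (Real.hasDerivAt_log (ne_of_gt (hxpos t ht))).comp t (hode t ht)
    rw [inv_mul_cancel_left₀ (ne_of_gt (hxpos t ht))] at h
    exact h
  -- continuity of x on [0, t]
  have hxcont : ∀ t : ℝ, 0 ≤ t → ContinuousOn x (Set.Icc 0 t) := by
    intro t ht s hs
    exact (hode s hs.1).continuousAt.continuousWithinAt
  have key : ∀ t : ℝ, 0 ≤ t →
      (∫ s in (0:ℝ)..t, φ s) - μ * t - γ * (∫ s in (0:ℝ)..t, x s)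
        = Real.log (x t) - Real.log (x 0) := by
    intro t ht
    have hxint : IntervalIntegrable x volume 0 t :=
      (hxcont t ht).intervalIntegrable_of_Icc ht
    have hφint : IntervalIntegrable φ volume 0 t := hφcont.intervalIntegrable 0 t
    have hfint : IntervalIntegrable (fun s => φ s - μ - γ * x s) volume 0 t := by
      exact ((hφint.sub (intervalIntegrable_const)).sub (hxint.const_mul γ))
    have hderiv : ∀ s ∈ Set.uIcc (0:ℝ) t,
        HasDerivAt (fun s => Real.log (x s)) (φ s - μ - γ * x s) s := by
      intro s hs
      rw [Set.uIcc_of_le ht] at hs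
      exact hlog s hs.1
    have := intervalIntegral.integral_eq_sub_of_hasDerivAt hderiv hfint
    rw [← this]
    rw [intervalIntegral.integral_sub (hφint.sub intervalIntegrable_const)
      (hxint.const_mul γ),
      intervalIntegral.integral_sub hφint intervalIntegrable_const,
      intervalIntegral.integral_const, intervalIntegral.integral_const_mul]
    simp [mul_comm]
  set K : ℝ := |Real.log X| + |Real.log C| + |Real.log (x 0)| with hK
  have hlogbd : ∀ t, 0 ≤ t → |Real.log (x t)| ≤ |Real.log X| + |Real.log C| := by
    intro t ht
    have h1 : Real.log X ≤ Real.log (x t) := Real.log_le_log hX (hxlo t ht)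
    have h2 : Real.log (x t) ≤ Real.log C :=
      Real.log_le_log (hxpos t ht) (hxhi t ht)
    rw [abs_le]
    constructor
    · have := neg_abs_le (Real.log X)
      have h3 : (0:ℝ) ≤ |Real.log C| := abs_nonneg _
      linarith
    · have := le_abs_self (Real.log C)
      have h3 : (0:ℝ) ≤ |Real.log X| := abs_nonneg _
      linarith
  have hbd : ∀ t : ℝ, 1 ≤ t →
      ‖(1 / t) * (∫ s in (0:ℝ)..t, φ s) - μ -
        γ * ((1 / t) * ∫ s in (0:ℝ)..t, x s)‖ ≤ K / t := by
    intro t ht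
    have htpos : 0 < t := lt_of_lt_of_le one_pos ht
    have heq : (1 / t) * (∫ s in (0:ℝ)..t, φ s) - μ -
        γ * ((1 / t) * ∫ s in (0:ℝ)..t, x s)
        = (Real.log (x t) - Real.log (x 0)) / t := by
      rw [← key t htpos.le]
      field_simp
    rw [heq, Real.norm_eq_abs, abs_div, abs_of_pos htpos]
    gcongr
    calc |Real.log (x t) - Real.log (x 0)| ≤ |Real.log (x t)| + |Real.log (x 0)| :=
          abs_sub _ _
      _ ≤ K := by
          have := hlogbd t htpos.le
          linarith
  have hKt : Filter.Tendsto (fun t : ℝ => K / t) Filter.atTop (nhds 0) := by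
    simpa [div_eq_mul_inv] using tendsto_const_nhds.mul tendsto_inv_atTop_zero (f := fun _ : ℝ => K)
  exact squeeze_zero_norm' (Filter.eventually_atTop.mpr ⟨1, hbd⟩) hKt
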